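/- Let d ≥ 1, let X, Y and Z be independent ℝ^d-valued random variables each with density f with respect to Lebesgue measure, let H be an invertible d×d real matrix, let K : ℝ^d → ℝ be bounded, measurable, compactly supported and even (K(−u) = K(u) for all u), and let ρ : ℝ^d → ℝ be bounded, measurable and even (ρ(−u) = ρ(u) for all u). Then for all x, t ∈ ℝ^d, E[K_H(X − x) K_H(Y − x) K_H(X − t) K_H(Z − t) ρ(X − Z) ρ(Y − X)] = |det H|⁻¹ ∫∫∫_{ℝ^d×ℝ^d×ℝ^d} K(p) K(q) K(p + H⁻¹(x − t)) K(r) ρ(H(p − q)) ρ(x − t + H(p − r)) f(x + Hp) f(x + Hq) f(t + Hr) dp dq dr. -/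

import Mathlib

open MeasureTheory ProbabilityTheory Filter
open scoped ENNReal NNReal Topology

noncomputable section

/-- The rescaled kernel `K_H(v) = |det H|⁻¹ * K (H⁻¹ v)`. -/
def kernelScaled {d : ℕ} (H : Matrix (Fin d) (Fin d) ℝ) (K : (Fin d → ℝ) → ℝ)
    (v : Fin d → ℝ) : ℝ :=
  |H.det|⁻¹ * K (H⁻¹.mulVec v)

section aux

lemma aux_pull_const {α : Type*} [MeasurableSpace α] {μ : Measure α} (c : ℝ) {g h : α → ℝ}
    (hgh : ∀ a, g a = c * h a) : ∫ a, g a ∂μ = c * ∫ a, h a ∂μ := by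
  simp only [hgh]
  exact integral_const_mul c h

lemma aux_measurable_mulVec {d : ℕ} (H : Matrix (Fin d) (Fin d) ℝ) :
    Measurable (fun v : Fin d → ℝ => H.mulVec v) := by
  have : (fun v : Fin d → ℝ => H.mulVec v) = H.mulVecLin := by
    funext v; simp [Matrix.mulVecLin]
  rw [this]
  exact H.mulVecLin.continuous_of_finiteDimensional.measurable

/-- Change of variables `u = c + H p` for the Lebesgue integral. -/
lemma aux_cov {d : ℕ} (H : Matrix (Fin d) (Fin d) ℝ) (hH : H.det ≠ 0)
    (c : Fin d → ℝ) {h : (Fin d → ℝ) → ℝ} (hh : Measurable h) :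
    ∫ u, h u = |H.det| * ∫ p, h (c + H.mulVec p) := by
  have hT : Measurable fun p : Fin d → ℝ => c + H.mulVec p :=
    measurable_const.add (aux_measurable_mulVec H)
  have hmap : volume.map (fun p : Fin d → ℝ => c + H.mulVec p)
      = ENNReal.ofReal (|H.det|⁻¹) • volume := by
    have h1 : (fun p : Fin d → ℝ => c + H.mulVec p)
        = (fun u => c + u) ∘ (Matrix.toLin' H) := by
      funext p; simp [Matrix.toLin'_apply]
    rw [h1, ← Measure.map_map (measurable_const_add c)
        (Matrix.toLin' H).continuous_of_finiteDimensional.measurable,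
      Real.map_matrix_volume_pi_eq_smul_volume_pi hH, Measure.map_smul,
      (measurePreserving_add_left volume c).map_eq, abs_inv]
  have key : ∫ p, h (c + H.mulVec p) = |H.det|⁻¹ * ∫ u, h u := by
    rw [← integral_map hT.aemeasurable hh.aestronglyMeasurable, hmap, integral_smul_measure,
      ENNReal.toReal_ofReal (by positivity), smul_eq_mul]
  rw [key, ← mul_assoc, mul_inv_cancel₀ (abs_ne_zero.mpr hH), one_mul]

/-- Integral against a `withDensity` measure with real nonnegative density. -/
lemma aux_wd {d : ℕ} {f : (Fin d → ℝ) → ℝ} (hfmeas : Measurable f) (hfnonneg : ∀ y, 0 ≤ f y)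
    (g : (Fin d → ℝ) → ℝ) :
    ∫ y, g y ∂(volume.withDensity fun y => ENNReal.ofReal (f y)) = ∫ y, f y * g y := by
  have h1 : (fun y : Fin d → ℝ => ENNReal.ofReal (f y))
      = fun y => ((Real.toNNReal (f y) : ℝ≥0) : ℝ≥0∞) := rfl
  rw [h1, integral_withDensity_eq_integral_smul hfmeas.real_toNNReal g]
  congr 1
  funext y
  simp [NNReal.smul_def, Real.coe_toNNReal _ (hfnonneg y)]

end aux

set_option maxHeartbeats 2000000 in
/-- Expectation computation in Lemma 6:
`E[K_H(X−x) K_H(Y−x) K_H(X−t) K_H(Z−t) ρ(X−Z) ρ(Y−X)]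
  = |det H|⁻¹ ∫∫∫ K(p) K(q) K(p+H⁻¹(x−t)) K(r) ρ(H(p−q)) ρ(x−t+H(p−r))
      f(x+Hp) f(x+Hq) f(t+Hr) dp dq dr`. -/
theorem expectation_W6n {d : ℕ} (hd : 1 ≤ d)
    {Ω : Type*} [MeasurableSpace Ω] (μ : Measure Ω) [IsProbabilityMeasure μ]
    (X Y Z : Ω → (Fin d → ℝ))
    (hXmeas : Measurable X) (hYmeas : Measurable Y) (hZmeas : Measurable Z)
    (hindep : iIndepFun ![X, Y, Z] μ)
    (f : (Fin d → ℝ) → ℝ) (hfmeas : Measurable f) (hfnonneg : ∀ y, 0 ≤ f y)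
    (hlawX : μ.map X = volume.withDensity (fun y => ENNReal.ofReal (f y)))
    (hlawY : μ.map Y = volume.withDensity (fun y => ENNReal.ofReal (f y)))
    (hlawZ : μ.map Z = volume.withDensity (fun y => ENNReal.ofReal (f y)))
    (H : Matrix (Fin d) (Fin d) ℝ) (hH : H.det ≠ 0)
    (K : (Fin d → ℝ) → ℝ) (hKmeas : Measurable K) (hKbd : ∃ C, ∀ u, |K u| ≤ C)
    (hKsupp : HasCompactSupport K) (hKeven : ∀ u, K (-u) = K u)
    (ρ : (Fin d → ℝ) → ℝ) (hρmeas : Measurable ρ) (hρbd : ∃ C, ∀ u, |ρ u| ≤ C)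
    (hρeven : ∀ u, ρ (-u) = ρ u)
    (x t : Fin d → ℝ) :
    ∫ ω, kernelScaled H K (X ω - x) * kernelScaled H K (Y ω - x) *
        kernelScaled H K (X ω - t) * kernelScaled H K (Z ω - t) *
        ρ (X ω - Z ω) * ρ (Y ω - X ω) ∂μ =
      |H.det|⁻¹ *
        ∫ p, ∫ q, ∫ r, K p * K q * K (p + H⁻¹.mulVec (x - t)) * K r *
          ρ (H.mulVec (p - q)) * ρ (x - t + H.mulVec (p - r)) *
          f (x + H.mulVec p) * f (x + H.mulVec q) * f (t + H.mulVec r) := by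
  classical
  obtain ⟨CK, hCK⟩ := hKbd
  obtain ⟨Cρ, hCρ⟩ := hρbd
  set ν : Measure (Fin d → ℝ) := volume.withDensity fun y => ENNReal.ofReal (f y) with hν
  have hprob : IsProbabilityMeasure ν := hlawX ▸ Measure.isProbabilityMeasure_map hXmeas.aemeasurable
  haveI := hprob
  have hkermeas : Measurable (kernelScaled H K) :=
    measurable_const.mul (hKmeas.comp (aux_measurable_mulVec H⁻¹))
  have hkerbd : ∀ v, |kernelScaled H K v| ≤ |H.det|⁻¹ * CK := by
    intro v
    rw [kernelScaled, abs_mul, abs_of_nonneg (inv_nonneg.2 (abs_nonneg _))]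
    exact mul_le_mul_of_nonneg_left (hCK _) (by positivity)
  have hCK0 : 0 ≤ CK := le_trans (abs_nonneg _) (hCK 0)
  have hCρ0 : 0 ≤ Cρ := le_trans (abs_nonneg _) (hCρ 0)
  -- the integrand as a function on the product space
  set Φ : (Fin d → ℝ) × ((Fin d → ℝ) × (Fin d → ℝ)) → ℝ := fun z =>
    kernelScaled H K (z.1 - x) * kernelScaled H K (z.2.1 - x) * kernelScaled H K (z.1 - t) *
      kernelScaled H K (z.2.2 - t) * ρ (z.1 - z.2.2) * ρ (z.2.1 - z.1) with hΦdef
  have hΦmeas : Measurable Φ := by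
    apply Measurable.mul
    apply Measurable.mul
    apply Measurable.mul
    apply Measurable.mul
    apply Measurable.mul
    · exact hkermeas.comp (measurable_fst.sub measurable_const)
    · exact hkermeas.comp ((measurable_fst.comp measurable_snd).sub measurable_const)
    · exact hkermeas.comp (measurable_fst.sub measurable_const)
    · exact hkermeas.comp ((measurable_snd.comp measurable_snd).sub measurable_const)
    · exact hρmeas.comp (measurable_fst.sub (measurable_snd.comp measurable_snd))
    · exact hρmeas.comp ((measurable_fst.comp measurable_snd).sub measurable_fst)
  set B : ℝ := (|H.det|⁻¹ * CK) * (|H.det|⁻¹ * CK) * (|H.det|⁻¹ * CK) * (|H.det|⁻¹ * CK)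
      * Cρ * Cρ with hBdef
  have hΦbd : ∀ z, ‖Φ z‖ ≤ B := by
    intro z
    rw [Real.norm_eq_abs, hΦdef]
    calc |kernelScaled H K (z.1 - x) * kernelScaled H K (z.2.1 - x) *
        kernelScaled H K (z.1 - t) * kernelScaled H K (z.2.2 - t) * ρ (z.1 - z.2.2) *
        ρ (z.2.1 - z.1)|
        = |kernelScaled H K (z.1 - x)| * |kernelScaled H K (z.2.1 - x)| *
          |kernelScaled H K (z.1 - t)| * |kernelScaled H K (z.2.2 - t)| * |ρ (z.1 - z.2.2)| *
          |ρ (z.2.1 - z.1)| := by simp [abs_mul]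
      _ ≤ B := by
          rw [hBdef]
          gcongr <;> first
            | exact hkerbd _
            | exact hCK _
            | exact hCρ _
            | positivity
            | exact abs_nonneg _
  -- independence: the law of the triple is the triple product of ν
  have hmeasvec : ∀ i, Measurable (![X, Y, Z] i) := by
    intro i; fin_cases i <;> assumption
  have hYZindep : IndepFun Y Z μ := hindep.indepFun (show (1 : Fin 3) ≠ 2 by decide)
  have hYZ : μ.map (fun ω => (Y ω, Z ω)) = ν.prod ν := by
    rw [(indepFun_iff_map_prod_eq_prod_map_map hYmeas.aemeasurable hZmeas.aemeasurable).mp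
      hYZindep, hlawY, hlawZ]
  have hX_YZ : IndepFun X (fun ω => (Y ω, Z ω)) μ :=
    (hindep.indepFun_prodMk hmeasvec 1 2 0 (by decide) (by decide)).symm
  have htriple : μ.map (fun ω => (X ω, (Y ω, Z ω))) = ν.prod (ν.prod ν) := by
    rw [(indepFun_iff_map_prod_eq_prod_map_map hXmeas.aemeasurable
      (hYmeas.prodMk hZmeas).aemeasurable).mp hX_YZ, hYZ, hlawX]
  -- step 1: rewrite the expectation as an integral over the product measure
  have step1 : ∫ ω, kernelScaled H K (X ω - x) * kernelScaled H K (Y ω - x) *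
      kernelScaled H K (X ω - t) * kernelScaled H K (Z ω - t) *
      ρ (X ω - Z ω) * ρ (Y ω - X ω) ∂μ = ∫ z, Φ z ∂(ν.prod (ν.prod ν)) := by
    rw [← htriple,
      integral_map (hXmeas.prodMk (hYmeas.prodMk hZmeas)).aemeasurable
        hΦmeas.aestronglyMeasurable]
  -- step 2: Fubini
  have hΦint : Integrable Φ (ν.prod (ν.prod ν)) :=
    (integrable_const B).mono' hΦmeas.aestronglyMeasurable (ae_of_all _ hΦbd)
  have hΦint2 : ∀ u : Fin d → ℝ, Integrable (fun vw => Φ (u, vw)) (ν.prod ν) := fun u =>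
    (integrable_const B).mono' (hΦmeas.comp measurable_prodMk_left).aestronglyMeasurable
      (ae_of_all _ fun z => hΦbd (u, z))
  have step2 : ∫ z, Φ z ∂(ν.prod (ν.prod ν)) = ∫ u, ∫ v, ∫ w, Φ (u, (v, w)) ∂ν ∂ν ∂ν := by
    rw [integral_prod _ hΦint]
    exact integral_congr_ae (ae_of_all _ fun u => integral_prod _ (hΦint2 u))
  -- step 3: innermost change of variables
  have cov3 : ∀ u v : Fin d → ℝ, ∫ w, Φ (u, (v, w)) ∂ν
      = |H.det| * ∫ r, f (t + H.mulVec r) * Φ (u, (v, t + H.mulVec r)) := by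
    intro u v
    rw [hν, aux_wd hfmeas hfnonneg]
    exact aux_cov H hH t (hfmeas.mul (hΦmeas.comp
      (measurable_const.prodMk (measurable_const.prodMk measurable_id))))
  have meas3 : ∀ u : Fin d → ℝ, Measurable fun z : (Fin d → ℝ) × (Fin d → ℝ) =>
      f (t + H.mulVec z.2) * Φ (u, (z.1, t + H.mulVec z.2)) := by
    intro u
    exact (hfmeas.comp (measurable_const.add ((aux_measurable_mulVec H).comp
      measurable_snd))).mul (hΦmeas.comp (measurable_const.prodMk (measurable_fst.prodMk
      (measurable_const.add ((aux_measurable_mulVec H).comp measurable_snd)))))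
  -- step 4: middle change of variables
  have cov2 : ∀ u : Fin d → ℝ,
      ∫ v, (|H.det| * ∫ r, f (t + H.mulVec r) * Φ (u, (v, t + H.mulVec r))) ∂ν
      = |H.det| * ∫ q, f (x + H.mulVec q) *
          (|H.det| * ∫ r, f (t + H.mulVec r) * Φ (u, (x + H.mulVec q, t + H.mulVec r))) := by
    intro u
    rw [hν, aux_wd hfmeas hfnonneg]
    exact aux_cov H hH x (hfmeas.mul (measurable_const.mul
      ((meas3 u).stronglyMeasurable.integral_prod_right'.measurable)))
  -- measurability for the outer change of variables
  have meas2 : Measurable fun z : ((Fin d → ℝ) × (Fin d → ℝ)) × (Fin d → ℝ) =>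
      f (t + H.mulVec z.2) * Φ (z.1.1, (x + H.mulVec z.1.2, t + H.mulVec z.2)) := by
    exact (hfmeas.comp (measurable_const.add ((aux_measurable_mulVec H).comp
      measurable_snd))).mul (hΦmeas.comp ((measurable_fst.comp measurable_fst).prodMk
      (((measurable_const.add ((aux_measurable_mulVec H).comp
        (measurable_snd.comp measurable_fst)))).prodMk
      (measurable_const.add ((aux_measurable_mulVec H).comp measurable_snd)))))
  have meas2' : Measurable fun z : (Fin d → ℝ) × (Fin d → ℝ) =>
      f (x + H.mulVec z.2) *
        (|H.det| * ∫ r, f (t + H.mulVec r) * Φ (z.1, (x + H.mulVec z.2, t + H.mulVec r))) := by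
    exact (hfmeas.comp (measurable_const.add ((aux_measurable_mulVec H).comp
      measurable_snd))).mul (measurable_const.mul
      meas2.stronglyMeasurable.integral_prod_right'.measurable)
  -- step 5: outer change of variables
  have cov1 : ∫ u, (|H.det| * ∫ q, f (x + H.mulVec q) *
        (|H.det| * ∫ r, f (t + H.mulVec r) * Φ (u, (x + H.mulVec q, t + H.mulVec r)))) ∂ν
      = |H.det| * ∫ p, f (x + H.mulVec p) * (|H.det| * ∫ q, f (x + H.mulVec q) *
          (|H.det| * ∫ r, f (t + H.mulVec r) *
            Φ (x + H.mulVec p, (x + H.mulVec q, t + H.mulVec r)))) := by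
    rw [hν, aux_wd hfmeas hfnonneg]
    exact aux_cov H hH x (hfmeas.mul (measurable_const.mul
      meas2'.stronglyMeasurable.integral_prod_right'.measurable))
  -- pointwise identification of the integrand
  have hinv : ∀ v : Fin d → ℝ, H⁻¹.mulVec (H.mulVec v) = v := fun v => by
    rw [Matrix.mulVec_mulVec, Matrix.nonsing_inv_mul _ (isUnit_iff_ne_zero.mpr hH), Matrix.one_mulVec]
  have hΦpt : ∀ p q r : Fin d → ℝ, Φ (x + H.mulVec p, (x + H.mulVec q, t + H.mulVec r))
      = (|H.det|⁻¹ * |H.det|⁻¹ * |H.det|⁻¹ * |H.det|⁻¹) *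
        (K p * K q * K (p + H⁻¹.mulVec (x - t)) * K r *
          ρ (H.mulVec (p - q)) * ρ (x - t + H.mulVec (p - r))) := by
    intro p q r
    have e1 : x + H.mulVec p - x = H.mulVec p := by abel
    have e2 : x + H.mulVec q - x = H.mulVec q := by abel
    have e3 : x + H.mulVec p - t = H.mulVec p + (x - t) := by abel
    have e4 : t + H.mulVec r - t = H.mulVec r := by abel
    have e5 : x + H.mulVec p - (t + H.mulVec r) = x - t + H.mulVec (p - r) := by
      rw [Matrix.mulVec_sub]; abel
    have e6 : x + H.mulVec q - (x + H.mulVec p) = -(H.mulVec (p - q)) := by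
      rw [Matrix.mulVec_sub]; abel
    have e7 : H⁻¹.mulVec (H.mulVec p + (x - t)) = p + H⁻¹.mulVec (x - t) := by
      rw [Matrix.mulVec_add, hinv]
    simp only [hΦdef, kernelScaled, e1, e2, e3, e4, e5, e6, e7, hinv, hρeven]
    ring
  -- put everything together
  rw [step1, step2]
  simp only [cov3]
  simp only [cov2]
  rw [cov1]
  simp only [hΦpt]
  -- now pure integral algebra
  set c4 : ℝ := |H.det|⁻¹ * |H.det|⁻¹ * |H.det|⁻¹ * |H.det|⁻¹ with hc4
  set E : (Fin d → ℝ) → (Fin d → ℝ) → (Fin d → ℝ) → ℝ := fun p q r =>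
    K p * K q * K (p + H⁻¹.mulVec (x - t)) * K r *
      ρ (H.mulVec (p - q)) * ρ (x - t + H.mulVec (p - r)) with hE
  have L3 : ∀ p q : Fin d → ℝ, ∫ r, f (t + H.mulVec r) * (c4 * E p q r)
      = c4 * ∫ r, f (t + H.mulVec r) * E p q r :=
    fun p q => aux_pull_const c4 (fun r => by ring)
  have L2 : ∀ p : Fin d → ℝ, ∫ q, f (x + H.mulVec q) *
        (|H.det| * (c4 * ∫ r, f (t + H.mulVec r) * E p q r))
      = (|H.det| * c4) * ∫ q, f (x + H.mulVec q) * ∫ r, f (t + H.mulVec r) * E p q r :=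
    fun p => aux_pull_const (|H.det| * c4) (fun q => by ring)
  have L1 : ∫ p, f (x + H.mulVec p) * (|H.det| * ((|H.det| * c4) *
        ∫ q, f (x + H.mulVec q) * ∫ r, f (t + H.mulVec r) * E p q r))
      = (|H.det| * (|H.det| * c4)) * ∫ p, f (x + H.mulVec p) *
          ∫ q, f (x + H.mulVec q) * ∫ r, f (t + H.mulVec r) * E p q r :=
    aux_pull_const (|H.det| * (|H.det| * c4)) (fun p => by ring)
  have R3 : ∀ p q : Fin d → ℝ, ∫ r, E p q r * f (x + H.mulVec p) * f (x + H.mulVec q) *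
        f (t + H.mulVec r)
      = (f (x + H.mulVec p) * f (x + H.mulVec q)) * ∫ r, f (t + H.mulVec r) * E p q r :=
    fun p q => aux_pull_const (f (x + H.mulVec p) * f (x + H.mulVec q)) (fun r => by ring)
  have R2 : ∀ p : Fin d → ℝ, ∫ q, (f (x + H.mulVec p) * f (x + H.mulVec q)) *
        ∫ r, f (t + H.mulVec r) * E p q r
      = f (x + H.mulVec p) * ∫ q, f (x + H.mulVec q) * ∫ r, f (t + H.mulVec r) * E p q r :=
    fun p => aux_pull_const (f (x + H.mulVec p)) (fun q => by ring)
  have hE' : ∀ p q r : Fin d → ℝ, K p * K q * K (p + H⁻¹.mulVec (x - t)) * K r *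
      ρ (H.mulVec (p - q)) * ρ (x - t + H.mulVec (p - r)) = E p q r := fun _ _ _ => rfl
  simp only [hE']
  simp only [L3, L2]
  rw [L1]
  simp only [hE]
  simp only [hE', R3, R2]
  rw [← mul_assoc]
  congr 1
  rw [hc4]
  field_simp
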